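/- Let K be a discretely valued field with valuation v, E an elliptic curve over K in minimal Weierstrass form, and P ∈ E(K) with v(x(P)) < 0 (i.e. (P.O)_v > 0). Then for every positive integer m with mP ≠ O, v(x(mP)) ≤ v(x(P)) < 0. -/

import Mathlib

open Polynomial

private lemma coe_nsmul_withTop (n : ℕ) (k : ℤ) :
    n • ((k : WithTop ℤ)) = ((n • k : ℤ) : WithTop ℤ) := by
  induction n with
  | zero => simp
  | succ n ih =>
      rw [succ_nsmul, ih, succ_nsmul, ← WithTop.coe_add]

private lemma addval_add_eq_left {K : Type*} [Field K] (v : AddValuation K (WithTop ℤ))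
    {a b : K} (h : v a < v b) : v (a + b) = v a := by
  refine le_antisymm ?_ ?_
  · by_contra hlt
    push_neg at hlt
    have h2 : v a = v ((a + b) + (-b)) := by ring_nf
    have h3 : min (v (a + b)) (v (-b)) ≤ v a := h2 ▸ v.map_add _ _
    rw [v.map_neg] at h3
    rcases min_le_iff.mp h3 with h4 | h4
    · exact absurd (lt_of_lt_of_le hlt h4) (lt_irrefl _)
    · exact absurd (lt_of_lt_of_le h h4) (lt_irrefl _)
  · have := v.map_add a b
    rwa [min_eq_left h.le] at this

/-- Lower bound for evaluations of polynomials with nonnegative-valuation coefficients. -/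
private lemma eval_val_lb {K : Type*} [Field K] (v : AddValuation K (WithTop ℤ))
    (q : Polynomial K) (d : ℕ) (hd : q.natDegree ≤ d)
    (hc : ∀ i, 0 ≤ v (q.coeff i)) (t : K) (ht : v t ≤ 0) :
    d • v t ≤ v (q.eval t) := by
  rw [eval_eq_sum_range' (Nat.lt_succ_of_le hd)]
  apply v.map_le_sum
  intro i hi
  rw [Finset.mem_range, Nat.lt_succ_iff] at hi
  rw [v.map_mul, v.map_pow]
  have h1 : d • v t ≤ i • v t := by
    have : d • v t = i • v t + (d - i) • v t := by
      rw [← add_nsmul, Nat.add_sub_cancel' hi]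
    rw [this]
    calc i • v t + (d - i) • v t ≤ i • v t + 0 := by
            refine add_le_add_right ?_ _
            exact nsmul_nonpos ht _
      _ = i • v t := add_zero _
  calc d • v t ≤ i • v t := h1
    _ = 0 + i • v t := (zero_add _).symm
    _ ≤ v (q.coeff i) + i • v t := add_le_add_left (hc i) _

theorem stmt_7 (K : Type*) [Field K] (v : AddValuation K (WithTop ℤ))
    (hdisc : ∀ n : ℤ, ∃ a : K, v a = (n : WithTop ℤ))
    (E : Type*) [AddCommGroup E] (x : E → K) (P : E)
    (φ ψsq : ℕ → Polynomial K)
    (hφ : ∀ m : ℕ, 0 < m → (φ m).Monic ∧ (φ m).natDegree = m ^ 2 ∧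
      ∀ i, 0 ≤ v ((φ m).coeff i))
    (hψsq : ∀ m : ℕ, 0 < m → (ψsq m).natDegree ≤ m ^ 2 - 1 ∧
      ∀ i, 0 ≤ v ((ψsq m).coeff i))
    (hne : ∀ m : ℕ, 0 < m → m • P ≠ 0 → (ψsq m).eval (x P) ≠ 0)
    (hx : ∀ m : ℕ, 0 < m → m • P ≠ 0 →
      x (m • P) = (φ m).eval (x P) / (ψsq m).eval (x P))
    (hP : v (x P) < 0) :
    ∀ m : ℕ, 0 < m → m • P ≠ 0 → v (x (m • P)) ≤ v (x P) := by
  intro m hm hmP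
  obtain ⟨hmon, hdeg, hφc⟩ := hφ m hm
  obtain ⟨hψdeg, hψc⟩ := hψsq m hm
  set t := x P with htdef
  set n := m ^ 2 with hn
  have hn1 : 1 ≤ n := by simpa [hn] using Nat.one_le_pow 2 m hm
  -- get the integer value of v t
  have htne : v t ≠ ⊤ := by
    intro h
    rw [h] at hP
    exact absurd hP (by simp)
  obtain ⟨k, hk⟩ : ∃ k : ℤ, v t = (k : WithTop ℤ) := by
    cases h : v t with
    | top => exact absurd h htne
    | coe k => exact ⟨k, rfl⟩
  have hk0 : k < 0 := by
    rw [hk] at hP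
    exact_mod_cast hP
  have ht0 : v t ≤ 0 := hP.le
  -- the remainder r = φ m - X^n
  set r : Polynomial K := φ m - X ^ n with hr
  have hrc : ∀ i, 0 ≤ v (r.coeff i) := by
    intro i
    rw [hr, coeff_sub, coeff_X_pow]
    by_cases hi : i = n
    · subst hi
      have h1 : (φ m).coeff n = 1 := by
        rw [← hdeg]; exact hmon
      rw [if_pos rfl, h1, sub_self]
      simp
    · simp only [if_neg hi, sub_zero]
      exact hφc i
  have hrdeg : r.natDegree ≤ n - 1 := by
    by_cases hr0 : r = 0
    · simp [hr0]
    have hdd : (φ m).degree = ((X : Polynomial K) ^ n).degree := by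
      rw [degree_X_pow, degree_eq_natDegree hmon.ne_zero, hdeg]
    have hlc : (φ m).leadingCoeff = ((X : Polynomial K) ^ n).leadingCoeff := by
      rw [hmon.leadingCoeff, (monic_X_pow n).leadingCoeff]
    have hlt : r.degree < (φ m).degree := degree_sub_lt hdd hmon.ne_zero hlc
    rw [degree_eq_natDegree hmon.ne_zero, hdeg] at hlt
    have := natDegree_lt_iff_degree_lt hr0 |>.mpr (by exact_mod_cast hlt)
    omega
  -- valuation of φ m eval t
  have hsplit : (φ m).eval t = t ^ n + r.eval t := by
    rw [hr]; simp [eval_sub, eval_pow]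
  have hns : n • v t = (((n : ℤ) * k : ℤ) : WithTop ℤ) := by
    rw [hk, coe_nsmul_withTop, nsmul_eq_mul]
  have hn1s : (n - 1) • v t = ((((n : ℤ) - 1) * k : ℤ) : WithTop ℤ) := by
    rw [hk, coe_nsmul_withTop, nsmul_eq_mul]
    congr 1
    push_cast [Nat.cast_sub hn1]
    ring
  have hrlb : (n - 1) • v t ≤ v (r.eval t) := eval_val_lb v r (n - 1) hrdeg hrc t ht0
  have hlt : v (t ^ n) < v (r.eval t) := by
    rw [v.map_pow, hns]
    refine lt_of_lt_of_le ?_ (hn1s ▸ hrlb)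
    exact_mod_cast (by nlinarith : (n : ℤ) * k < ((n : ℤ) - 1) * k)
  have hφval : v ((φ m).eval t) = (((n : ℤ) * k : ℤ) : WithTop ℤ) := by
    rw [hsplit, addval_add_eq_left v hlt, v.map_pow, hns]
  -- the key multiplicative identity
  have hψne := hne m hm hmP
  have hmul : x (m • P) * (ψsq m).eval t = (φ m).eval t := by
    rw [hx m hm hmP]
    field_simp
  have hkey : v (x (m • P)) + v ((ψsq m).eval t) = (((n : ℤ) * k : ℤ) : WithTop ℤ) := by
    rw [← v.map_mul, hmul, hφval]
  -- finiteness
  have hψtop : v ((ψsq m).eval t) ≠ ⊤ := v.ne_top_iff.mpr hψne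
  obtain ⟨l, hl⟩ : ∃ l : ℤ, v ((ψsq m).eval t) = (l : WithTop ℤ) := by
    cases h : v ((ψsq m).eval t) with
    | top => exact absurd h hψtop
    | coe l => exact ⟨l, rfl⟩
  have hxtop : v (x (m • P)) ≠ ⊤ := by
    intro h
    rw [h, top_add] at hkey
    exact WithTop.top_ne_coe hkey
  obtain ⟨j, hj⟩ : ∃ j : ℤ, v (x (m • P)) = (j : WithTop ℤ) := by
    cases h : v (x (m • P)) with
    | top => exact absurd h hxtop
    | coe j => exact ⟨j, rfl⟩
  have hψlb : (n - 1) • v t ≤ v ((ψsq m).eval t) := eval_val_lb v (ψsq m) (n - 1) hψdeg hψc t ht0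
  rw [hj, hl, ← WithTop.coe_add, WithTop.coe_eq_coe] at hkey
  rw [hn1s, hl, WithTop.coe_le_coe] at hψlb
  rw [hj, hk, WithTop.coe_le_coe]
  nlinarith [hkey, hψlb]
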